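/- Let n ≥ 3 be odd and set k = (n+1)/2. Define the constants A = 2^{k−1}(C(n−2, k−2) + C(n−2, k−1)) and B = 2^k · C(n−1, k), where C(·,·) denotes the binomial coefficient. Then the smooth function u : ℝ^{n−1} × ℝ → ℝ defined by u(x, t) = |x|² eᵗ + (1/(A(k−1)²)) e^{−(k−1)t} − (B/A) eᵗ satisfies σ_k(D²u(x, t)) = 1 for every (x, t) ∈ ℝ^{n−1} × ℝ. -/

import Mathlib

/-- The `k`-th elementary symmetric function of a square real matrix:
the sum of its `k × k` principal minors. -/
noncomputable def sigmaK {ι : Type*} [Fintype ι] [DecidableEq ι] (k : ℕ)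
    (A : Matrix ι ι ℝ) : ℝ :=
  ∑ s ∈ (Finset.univ : Finset ι).powersetCard k,
    Matrix.det (fun i j : {x : ι // x ∈ s} => A i.1 j.1)

/-- The Hessian matrix of `u` at `x`, with entries `∂ᵢ∂ⱼ u (x)`. -/
noncomputable def hessian {ι : Type*} [Fintype ι] [DecidableEq ι]
    (u : (ι → ℝ) → ℝ) (x : ι → ℝ) : Matrix ι ι ℝ :=
  fun i j => fderiv ℝ (fun y => fderiv ℝ u y (Pi.single j 1)) x (Pi.single i 1)

open Real ContinuousLinearMap

variable {α : Type*} [Fintype α] [DecidableEq α]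

noncomputable def Pr (i : α ⊕ Unit) : (α ⊕ Unit → ℝ) →L[ℝ] ℝ := ContinuousLinearMap.proj i

lemma Pr_apply (i : α ⊕ Unit) (w : α ⊕ Unit → ℝ) : Pr i w = w i := rfl

lemma pdU (c1 c2 μ : ℝ) (y w : α ⊕ Unit → ℝ) :
    fderiv ℝ (fun v : α ⊕ Unit → ℝ => (∑ i, v (Sum.inl i) ^ 2) * Real.exp (v (Sum.inr ()))
      + c1 * Real.exp (μ * v (Sum.inr ())) - c2 * Real.exp (v (Sum.inr ()))) y w =
    (∑ i, 2 * y (Sum.inl i) * w (Sum.inl i)) * Real.exp (y (Sum.inr ()))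
    + ((∑ i, y (Sum.inl i) ^ 2) * Real.exp (y (Sum.inr ()))
        + c1 * μ * Real.exp (μ * y (Sum.inr ())) - c2 * Real.exp (y (Sum.inr ()))) * w (Sum.inr ()) := by
  have hτ : HasFDerivAt (fun v : α ⊕ Unit → ℝ => v (Sum.inr ())) (Pr (Sum.inr ())) y := by
    exact hasFDerivAt_apply (Sum.inr ()) y
  have hexp := hτ.exp
  have hsq : ∀ i : α, HasFDerivAt (fun v : α ⊕ Unit → ℝ => v (Sum.inl i) ^ 2)
      (y (Sum.inl i) • Pr (Sum.inl i) + y (Sum.inl i) • Pr (Sum.inl i)) y := by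
    intro i
    have h : HasFDerivAt (fun v : α ⊕ Unit → ℝ => v (Sum.inl i)) (Pr (Sum.inl i)) y := by
      exact hasFDerivAt_apply (Sum.inl i) y
    simpa [pow_two] using h.fun_mul h
  have hs : HasFDerivAt (fun v : α ⊕ Unit → ℝ => ∑ i, v (Sum.inl i) ^ 2)
      (∑ i : α, (y (Sum.inl i) • Pr (Sum.inl i) + y (Sum.inl i) • Pr (Sum.inl i))) y :=
    HasFDerivAt.fun_sum fun i _ => hsq i
  have hμ : HasFDerivAt (fun v : α ⊕ Unit → ℝ => Real.exp (μ * v (Sum.inr ())))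
      (Real.exp (μ * y (Sum.inr ())) • (μ • Pr (Sum.inr ()))) y := (hτ.const_mul μ).exp
  have H := (((hs.fun_mul hexp).fun_add (hμ.const_mul c1)).fun_sub (hexp.const_mul c2))
  rw [H.fderiv]
  simp only [ContinuousLinearMap.add_apply, ContinuousLinearMap.sub_apply,
    ContinuousLinearMap.smul_apply, ContinuousLinearMap.coe_sum', Finset.sum_apply,
    Pr_apply, smul_eq_mul]
  have : ∀ i : α, y (Sum.inl i) * w (Sum.inl i) + y (Sum.inl i) * w (Sum.inl i)
      = 2 * y (Sum.inl i) * w (Sum.inl i) := fun i => by ring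
  simp only [this]
  ring

lemma pdG (j₀ : α) (y w : α ⊕ Unit → ℝ) :
    fderiv ℝ (fun v : α ⊕ Unit → ℝ => 2 * v (Sum.inl j₀) * Real.exp (v (Sum.inr ()))) y w =
      2 * w (Sum.inl j₀) * Real.exp (y (Sum.inr ()))
      + 2 * y (Sum.inl j₀) * Real.exp (y (Sum.inr ())) * w (Sum.inr ()) := by
  have hτ : HasFDerivAt (fun v : α ⊕ Unit → ℝ => v (Sum.inr ())) (Pr (Sum.inr ())) y := by
    exact hasFDerivAt_apply (Sum.inr ()) y
  have hexp := hτ.exp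
  have hj : HasFDerivAt (fun v : α ⊕ Unit → ℝ => v (Sum.inl j₀)) (Pr (Sum.inl j₀)) y := by
    exact hasFDerivAt_apply (Sum.inl j₀) y
  have H := (hj.const_mul (2:ℝ)).fun_mul hexp
  rw [H.fderiv]
  simp only [ContinuousLinearMap.add_apply, ContinuousLinearMap.smul_apply, Pr_apply,
    smul_eq_mul]
  ring

lemma hessU (c1 c2 μ : ℝ) (v : α ⊕ Unit → ℝ) :
    hessian (fun w : α ⊕ Unit → ℝ => (∑ i, w (Sum.inl i) ^ 2) * Real.exp (w (Sum.inr ()))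
      + c1 * Real.exp (μ * w (Sum.inr ())) - c2 * Real.exp (w (Sum.inr ()))) v =
    Matrix.fromBlocks
      (Matrix.diagonal fun _ : α => 2 * Real.exp (v (Sum.inr ())))
      (fun i _ => 2 * v (Sum.inl i) * Real.exp (v (Sum.inr ())))
      (fun _ j => 2 * v (Sum.inl j) * Real.exp (v (Sum.inr ())))
      (fun _ _ => (∑ i, v (Sum.inl i) ^ 2) * Real.exp (v (Sum.inr ()))
        + c1 * μ ^ 2 * Real.exp (μ * v (Sum.inr ())) - c2 * Real.exp (v (Sum.inr ()))) := by
  funext p q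
  unfold hessian
  cases q with
  | inl j₀ =>
    have hfun : (fun y : α ⊕ Unit → ℝ => fderiv ℝ (fun w : α ⊕ Unit → ℝ =>
        (∑ i, w (Sum.inl i) ^ 2) * Real.exp (w (Sum.inr ()))
        + c1 * Real.exp (μ * w (Sum.inr ())) - c2 * Real.exp (w (Sum.inr ()))) y
        (Pi.single (Sum.inl j₀) 1)) =
        fun y => 2 * y (Sum.inl j₀) * Real.exp (y (Sum.inr ())) := by
      funext y
      rw [pdU]
      simp [Pi.single_apply, Finset.sum_ite_eq', mul_ite]
    rw [hfun, pdG]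
    cases p with
    | inl i₀ =>
      simp [Pi.single_apply, Matrix.fromBlocks, Matrix.diagonal, eq_comm]
    | inr _ =>
      simp [Pi.single_apply, Matrix.fromBlocks]
  | inr u₀ =>
    have hfun : (fun y : α ⊕ Unit → ℝ => fderiv ℝ (fun w : α ⊕ Unit → ℝ =>
        (∑ i, w (Sum.inl i) ^ 2) * Real.exp (w (Sum.inr ()))
        + c1 * Real.exp (μ * w (Sum.inr ())) - c2 * Real.exp (w (Sum.inr ()))) y
        (Pi.single (Sum.inr u₀) 1)) =
        fun y : α ⊕ Unit → ℝ => (∑ i, y (Sum.inl i) ^ 2) * Real.exp (y (Sum.inr ()))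
          + (c1 * μ) * Real.exp (μ * y (Sum.inr ())) - c2 * Real.exp (y (Sum.inr ())) := by
      funext y
      rw [pdU]
      simp [Pi.single_apply]
    rw [hfun, pdU]
    cases p with
    | inl i₀ =>
      simp [Pi.single_apply, Finset.sum_ite_eq', mul_ite, Matrix.fromBlocks]
    | inr _ =>
      simp [Pi.single_apply, Matrix.fromBlocks]
      ring

section dets
variable (a d : ℝ) (b : α → ℝ)

variable (a d : ℝ) (b : α → ℝ)

noncomputable def Mar : Matrix (α ⊕ Unit) (α ⊕ Unit) ℝ :=
  Matrix.fromBlocks (Matrix.diagonal fun _ : α => a)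
    (fun i _ => b i) (fun _ j => b j) (fun _ _ => d)

lemma Mar_offdiag {x y : α ⊕ Unit} (hx : x ≠ Sum.inr ()) (hy : y ≠ Sum.inr ()) :
    Mar a d b x y = if x = y then a else 0 := by
  cases x with
  | inl i =>
    cases y with
    | inl j =>
      by_cases h : i = j <;> simp [Mar, Matrix.fromBlocks, Matrix.diagonal, h]
    | inr u => exact absurd rfl hy
  | inr u => exact absurd rfl hx

lemma Mar_row {x : α ⊕ Unit} (hx : x ≠ Sum.inr ()) :
    Mar a d b (Sum.inr ()) x = Sum.elim b (fun _ => 0) x ∧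
    Mar a d b x (Sum.inr ()) = Sum.elim b (fun _ => 0) x := by
  cases x with
  | inl i => simp [Mar, Matrix.fromBlocks]
  | inr u => exact absurd rfl hx

lemma det_no (s : Finset (α ⊕ Unit)) (hτ : Sum.inr () ∉ s) :
    Matrix.det (fun p q : {x : α ⊕ Unit // x ∈ s} => Mar a d b p.1 q.1) = a ^ s.card := by
  have hne : ∀ p : {x : α ⊕ Unit // x ∈ s}, p.1 ≠ Sum.inr () := by
    rintro ⟨x, hx⟩ rfl; exact hτ hx
  have : (fun p q : {x : α ⊕ Unit // x ∈ s} => Mar a d b p.1 q.1)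
      = Matrix.diagonal (fun _ => a) := by
    funext p q
    rw [Mar_offdiag a d b (hne p) (hne q)]
    by_cases h : p = q
    · subst h; simp [Matrix.diagonal]
    · have : p.1 ≠ q.1 := fun hh => h (Subtype.ext hh)
      simp [Matrix.diagonal_apply_ne _ h, this]
  rw [this, Matrix.det_diagonal]
  simp [Finset.prod_const, Fintype.card_coe]

lemma det_yes (ha : a ≠ 0) (s : Finset (α ⊕ Unit)) (hτ : Sum.inr () ∈ s) :
    Matrix.det (fun p q : {x : α ⊕ Unit // x ∈ s} => Mar a d b p.1 q.1)
      = a ^ (s.erase (Sum.inr ())).card *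
        (d - a⁻¹ * ∑ x ∈ s.erase (Sum.inr ()), (Sum.elim b (fun _ => 0) x) ^ 2) := by
  classical
  set t := s.erase (Sum.inr ()) with hts
  set Bf : α ⊕ Unit → ℝ := Sum.elim b (fun _ => 0) with hBf
  -- the equivalence
  have hmem : ∀ p : {x : α ⊕ Unit // x ∈ s}, p.1 ≠ Sum.inr () → p.1 ∈ t :=
    fun p hp => Finset.mem_erase.2 ⟨hp, p.2⟩
  let e : {x : α ⊕ Unit // x ∈ s} ≃ ({x : α ⊕ Unit // x ∈ t} ⊕ Unit) :=
    { toFun := fun p => if h : p.1 = Sum.inr () then Sum.inr () else Sum.inl ⟨p.1, hmem p h⟩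
      invFun := Sum.elim (fun q => ⟨q.1, Finset.mem_of_mem_erase q.2⟩) (fun _ => ⟨Sum.inr (), hτ⟩)
      left_inv := by
        rintro ⟨x, hx⟩
        by_cases h : x = Sum.inr () <;> simp [h]
      right_inv := by
        rintro (⟨x, hx⟩ | u)
        · have : x ≠ Sum.inr () := (Finset.mem_erase.1 hx).1
          simp [this]
        · simp }
  set A' : Matrix {x : α ⊕ Unit // x ∈ t} {x : α ⊕ Unit // x ∈ t} ℝ :=
    Matrix.diagonal (fun _ => a) with hA'
  set M' : Matrix ({x : α ⊕ Unit // x ∈ t} ⊕ Unit) ({x : α ⊕ Unit // x ∈ t} ⊕ Unit) ℝ :=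
    Matrix.fromBlocks A' (fun p _ => Bf p.1) (fun _ q => Bf q.1) (fun _ _ => d) with hM'
  have key : (fun p q : {x : α ⊕ Unit // x ∈ s} => Mar a d b p.1 q.1) = M'.submatrix e e := by
    funext p q
    simp only [Matrix.submatrix_apply]
    by_cases hp : p.1 = Sum.inr () <;> by_cases hq : q.1 = Sum.inr ()
    · simp only [e, Equiv.coe_fn_mk, dif_pos hp, dif_pos hq, hM']
      rw [hp, hq]; simp [Mar, Matrix.fromBlocks]
    · simp only [e, Equiv.coe_fn_mk, dif_pos hp, dif_neg hq, hM']
      rw [hp]; simpa [Matrix.fromBlocks] using (Mar_row a d b hq).1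
    · simp only [e, Equiv.coe_fn_mk, dif_neg hp, dif_pos hq, hM']
      rw [hq]; simpa [Matrix.fromBlocks] using (Mar_row a d b hp).2
    · simp only [e, Equiv.coe_fn_mk, dif_neg hp, dif_neg hq, hM']
      rw [Mar_offdiag a d b hp hq]
      by_cases h : p.1 = q.1
      · simp [Matrix.fromBlocks, hA', Matrix.diagonal, Subtype.ext h, h]
      · have : (⟨p.1, hmem p hp⟩ : {x : α ⊕ Unit // x ∈ t}) ≠ ⟨q.1, hmem q hq⟩ := by
          simp [Subtype.ext_iff, h]
        simp [Matrix.fromBlocks, hA', Matrix.diagonal_apply_ne _ this, h]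
  rw [key, Matrix.det_submatrix_equiv_self]
  haveI : Invertible A' :=
    invertibleOfLeftInverse A' (Matrix.diagonal fun _ => a⁻¹) (by
      simp [hA', Matrix.diagonal_mul_diagonal, inv_mul_cancel₀ ha])
  rw [hM', Matrix.det_fromBlocks₁₁ A' (fun p (_ : Unit) => Bf p.1) (fun (_ : Unit) q => Bf q.1)
    (fun _ _ => d)]
  have hinv : ⅟A' = Matrix.diagonal (fun _ => a⁻¹) :=
    invOf_eq_left_inv (by simp [hA', Matrix.diagonal_mul_diagonal, inv_mul_cancel₀ ha])
  have hdetA : A'.det = a ^ t.card := by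
    rw [hA', Matrix.det_diagonal]
    simp [Finset.prod_const, Fintype.card_coe]
  rw [hdetA, hinv, Matrix.det_unique]
  congr 1
  show d - _ = _
  congr 1
  have : a⁻¹ * ∑ x ∈ t, Bf x ^ 2 = ∑ j : {x : α ⊕ Unit // x ∈ t}, Bf j.1 * a⁻¹ * Bf j.1 := by
    rw [← Finset.sum_coe_sort t (fun x => Bf x ^ 2), Finset.mul_sum]
    exact Finset.sum_congr rfl fun j _ => by ring
  rw [this]
  show ∑ j, (∑ l, Bf l.1 * (Matrix.diagonal fun _ : {x : α ⊕ Unit // x ∈ t} => a⁻¹) l j) * Bf j.1 = _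
  simp [Matrix.mul_apply, Matrix.diagonal_apply, Finset.sum_ite_eq, Finset.mul_sum]



lemma count_mem_powersetCard (U : Finset (α ⊕ Unit)) (x : α ⊕ Unit) (hx : x ∈ U) (m : ℕ)
    (hm : 1 ≤ m) :
    ((U.powersetCard m).filter (fun t => x ∈ t)).card = (U.card - 1).choose (m - 1) := by
  classical
  have h := Finset.card_nbij' (s := (U.powersetCard m).filter (fun t => x ∈ t))
    (t := (U.erase x).powersetCard (m - 1))
    (fun t => t.erase x) (fun t => insert x t)
    (by
      intro t ht
      rw [Finset.mem_coe, Finset.mem_filter, Finset.mem_powersetCard] at ht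
      rw [Finset.mem_coe, Finset.mem_powersetCard]
      constructor
      · intro y hy
        rw [Finset.mem_erase] at hy ⊢
        exact ⟨hy.1, ht.1.1 hy.2⟩
      · rw [Finset.card_erase_of_mem ht.2, ht.1.2])
    (by
      intro t ht
      rw [Finset.mem_coe, Finset.mem_powersetCard] at ht
      have hxt : x ∉ t := fun h => (Finset.mem_erase.1 (ht.1 h)).1 rfl
      rw [Finset.mem_coe, Finset.mem_filter, Finset.mem_powersetCard]
      refine ⟨⟨?_, ?_⟩, Finset.mem_insert_self x t⟩
      · intro y hy
        rcases Finset.mem_insert.1 hy with rfl | hy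
        · exact hx
        · exact Finset.mem_of_mem_erase (ht.1 hy)
      · rw [Finset.card_insert_of_notMem hxt, ht.2]
        omega)
    (by
      intro t ht
      rw [Finset.mem_coe, Finset.mem_filter] at ht
      exact Finset.insert_erase ht.2)
    (by
      intro t ht
      rw [Finset.mem_coe, Finset.mem_powersetCard] at ht
      have hxt : x ∉ t := fun h => (Finset.mem_erase.1 (ht.1 h)).1 rfl
      exact Finset.erase_insert hxt)
  rw [h, Finset.card_powersetCard, Finset.card_erase_of_mem hx]

lemma sigma_arrow (k : ℕ) (hk2 : 2 ≤ k) (a d : ℝ) (ha : a ≠ 0) (b : α → ℝ) :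
    sigmaK k (Mar a d b)
      = ((Fintype.card α).choose k : ℝ) * a ^ k
        + ((Fintype.card α).choose (k - 1) : ℝ) * a ^ (k - 1) * d
        - ((Fintype.card α - 1).choose (k - 2) : ℝ) * a ^ (k - 2) * ∑ i, b i ^ 2 := by
  classical
  set τ : α ⊕ Unit := Sum.inr () with hτdef
  set Bf : α ⊕ Unit → ℝ := Sum.elim b (fun _ => 0) with hBf
  set U : Finset (α ⊕ Unit) := Finset.univ.erase τ with hU
  have hcardU : U.card = Fintype.card α := by
    rw [hU, Finset.card_erase_of_mem (Finset.mem_univ τ), Finset.card_univ,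
      Fintype.card_sum, Fintype.card_unit]
    omega
  unfold sigmaK
  rw [← Finset.sum_filter_add_sum_filter_not
    ((Finset.univ : Finset (α ⊕ Unit)).powersetCard k) (fun s => τ ∈ s)]
  -- part B : τ ∉ s
  have hBset : ((Finset.univ : Finset (α ⊕ Unit)).powersetCard k).filter (fun s => τ ∉ s)
      = U.powersetCard k := by
    ext s
    simp only [Finset.mem_filter, Finset.mem_powersetCard, hU, Finset.subset_erase]
    tauto
  have hBval : ∑ s ∈ ((Finset.univ : Finset (α ⊕ Unit)).powersetCard k).filter
        (fun s => ¬ τ ∈ s),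
      Matrix.det (fun p q : {x : α ⊕ Unit // x ∈ s} => Mar a d b p.1 q.1)
      = ((Fintype.card α).choose k : ℝ) * a ^ k := by
    rw [hBset]
    rw [Finset.sum_congr rfl (fun s hs => det_no a d b s
      (fun h => (Finset.mem_erase.1 ((Finset.mem_powersetCard.1 hs).1 h)).1 rfl))]
    rw [Finset.sum_congr rfl (fun s hs => by
      rw [(Finset.mem_powersetCard.1 hs).2])]
    rw [Finset.sum_const, Finset.card_powersetCard, hcardU, nsmul_eq_mul]
  rw [hBval]
  -- part A : τ ∈ s
  have hAval : ∑ s ∈ ((Finset.univ : Finset (α ⊕ Unit)).powersetCard k).filter (fun s => τ ∈ s),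
      Matrix.det (fun p q : {x : α ⊕ Unit // x ∈ s} => Mar a d b p.1 q.1)
      = ∑ t ∈ U.powersetCard (k - 1),
          a ^ (k - 1) * (d - a⁻¹ * ∑ x ∈ t, Bf x ^ 2) := by
    refine Finset.sum_nbij' (fun s => s.erase τ) (fun t => insert τ t) ?_ ?_ ?_ ?_ ?_
    · intro s hs
      rw [Finset.mem_filter, Finset.mem_powersetCard] at hs
      rw [Finset.mem_powersetCard]
      constructor
      · intro y hy
        rw [Finset.mem_erase] at hy
        rw [hU, Finset.mem_erase]
        exact ⟨hy.1, Finset.mem_univ y⟩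
      · rw [Finset.card_erase_of_mem hs.2, hs.1.2]
    · intro t ht
      rw [Finset.mem_powersetCard] at ht
      have hxt : τ ∉ t := fun h => (Finset.mem_erase.1 (ht.1 h)).1 rfl
      rw [Finset.mem_filter, Finset.mem_powersetCard]
      refine ⟨⟨Finset.subset_univ _, ?_⟩, Finset.mem_insert_self τ t⟩
      rw [Finset.card_insert_of_notMem hxt, ht.2]
      omega
    · intro s hs
      rw [Finset.mem_filter] at hs
      exact Finset.insert_erase hs.2
    · intro t ht
      rw [Finset.mem_powersetCard] at ht
      have hxt : τ ∉ t := fun h => (Finset.mem_erase.1 (ht.1 h)).1 rfl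
      exact Finset.erase_insert hxt
    · intro s hs
      rw [Finset.mem_filter, Finset.mem_powersetCard] at hs
      rw [det_yes a d b ha s hs.2, Finset.card_erase_of_mem hs.2, hs.1.2]
  rw [hAval]
  have hsub : ∑ t ∈ U.powersetCard (k - 1), a ^ (k - 1) * (d - a⁻¹ * ∑ x ∈ t, Bf x ^ 2)
      = ((Fintype.card α).choose (k - 1) : ℝ) * a ^ (k - 1) * d
        - ((Fintype.card α - 1).choose (k - 2) : ℝ) * a ^ (k - 2) * ∑ i, b i ^ 2 := by
    have hexpand : ∀ t : Finset (α ⊕ Unit),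
        a ^ (k - 1) * (d - a⁻¹ * ∑ x ∈ t, Bf x ^ 2)
        = a ^ (k - 1) * d - a ^ (k - 2) * ∑ x ∈ t, Bf x ^ 2 := by
      intro t
      have hpow : a ^ (k - 1) * a⁻¹ = a ^ (k - 2) := by
        have hk1 : k - 1 = (k - 2) + 1 := by omega
        rw [hk1, pow_succ, mul_assoc, mul_inv_cancel₀ ha, mul_one]
      rw [mul_sub]
      congr 1
      rw [← mul_assoc, hpow]
    rw [Finset.sum_congr rfl fun t _ => hexpand t, Finset.sum_sub_distrib,
      Finset.sum_const, Finset.card_powersetCard, hcardU, nsmul_eq_mul, ← mul_assoc]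
    congr 1
    rw [← Finset.mul_sum]
    -- double sum counting
    have hdouble : ∑ t ∈ U.powersetCard (k - 1), ∑ x ∈ t, Bf x ^ 2
        = ((Fintype.card α - 1).choose (k - 2) : ℝ) * ∑ i, b i ^ 2 := by
      have step1 : ∀ t ∈ U.powersetCard (k - 1),
          ∑ x ∈ t, Bf x ^ 2 = ∑ x ∈ U, if x ∈ t then Bf x ^ 2 else 0 := by
        intro t ht
        rw [Finset.sum_ite_mem, Finset.inter_eq_right.2 (Finset.mem_powersetCard.1 ht).1]
      rw [Finset.sum_congr rfl step1, Finset.sum_comm]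
      have step2 : ∀ x ∈ U, ∑ t ∈ U.powersetCard (k - 1), (if x ∈ t then Bf x ^ 2 else 0)
          = ((Fintype.card α - 1).choose (k - 2) : ℝ) * Bf x ^ 2 := by
        intro x hx
        rw [Finset.sum_ite, Finset.sum_const, Finset.sum_const_zero, add_zero,
          count_mem_powersetCard U x hx (k - 1) (by omega), nsmul_eq_mul, hcardU,
          show k - 1 - 1 = k - 2 by omega]
      rw [Finset.sum_congr rfl step2, ← Finset.mul_sum]
      congr 1
      rw [hU]
      rw [Finset.sum_erase _ (by simp [hBf, hτdef])]
      rw [Fintype.sum_sum_type]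
      simp [hBf]
    rw [hdouble]
    ring
  rw [hsub]
  ring



set_option maxHeartbeats 1600000 in
/-- For odd `n ≥ 3` and `k = (n+1)/2`, the explicit function
`u(x,t) = |x|² eᵗ + (1/(A(k−1)²)) e^{−(k−1)t} − (B/A) eᵗ` on `ℝ^{n-1} × ℝ`
solves `σ_k(D²u) = 1`. -/
theorem explicit_solution_sigmaK (n k : ℕ) (hn : 3 ≤ n) (hodd : Odd n)
    (hk : k = (n + 1) / 2) (A B : ℝ)
    (hA : A = 2 ^ (k - 1) * (((n - 2).choose (k - 2) : ℝ) + ((n - 2).choose (k - 1) : ℝ)))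
    (hB : B = 2 ^ k * ((n - 1).choose k : ℝ))
    (u : (Fin (n - 1) ⊕ Unit → ℝ) → ℝ)
    (hu : u = fun v => (∑ i : Fin (n - 1), v (Sum.inl i) ^ 2) * Real.exp (v (Sum.inr ()))
      + (1 / (A * ((k : ℝ) - 1) ^ 2)) * Real.exp (-((k : ℝ) - 1) * v (Sum.inr ()))
      - (B / A) * Real.exp (v (Sum.inr ()))) :
    ∀ v, sigmaK k (hessian u v) = 1 := by
  intro v
  obtain ⟨m, hm⟩ := hodd
  obtain ⟨p, hn3, hk3⟩ : ∃ p, n = 2 * p + 3 ∧ k = p + 2 := ⟨m - 1, by omega, by omega⟩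
  subst hk3
  subst hn3
  rw [hu, hessU]
  have hE : Real.exp (v (Sum.inr ())) ≠ 0 := (Real.exp_pos _).ne'
  have ha : (2 : ℝ) * Real.exp (v (Sum.inr ())) ≠ 0 := by positivity
  rw [show (Matrix.fromBlocks
      (Matrix.diagonal fun _ : Fin (2 * p + 3 - 1) => 2 * Real.exp (v (Sum.inr ())))
      (fun i _ => 2 * v (Sum.inl i) * Real.exp (v (Sum.inr ())))
      (fun _ j => 2 * v (Sum.inl j) * Real.exp (v (Sum.inr ())))
      (fun _ _ => (∑ i, v (Sum.inl i) ^ 2) * Real.exp (v (Sum.inr ()))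
        + 1 / (A * ((↑(p + 2) : ℝ) - 1) ^ 2) * (-((↑(p + 2) : ℝ) - 1)) ^ 2
            * Real.exp (-((↑(p + 2) : ℝ) - 1) * v (Sum.inr ()))
        - B / A * Real.exp (v (Sum.inr ()))))
      = Mar (2 * Real.exp (v (Sum.inr ())))
        ((∑ i, v (Sum.inl i) ^ 2) * Real.exp (v (Sum.inr ()))
          + 1 / (A * ((↑(p + 2) : ℝ) - 1) ^ 2) * (-((↑(p + 2) : ℝ) - 1)) ^ 2
              * Real.exp (-((↑(p + 2) : ℝ) - 1) * v (Sum.inr ()))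
          - B / A * Real.exp (v (Sum.inr ())))
        (fun i => 2 * v (Sum.inl i) * Real.exp (v (Sum.inr ()))) from rfl]
  rw [sigma_arrow _ (by omega) _ _ ha _]
  set E := Real.exp (v (Sum.inr ())) with hEdef
  set X := ∑ i : Fin (2 * p + 3 - 1), v (Sum.inl i) ^ 2 with hX
  set G := Real.exp (-((↑(p + 2) : ℝ) - 1) * v (Sum.inr ())) with hG
  have e1 : Fintype.card (Fin (2 * p + 3 - 1)) = 2 * p + 2 := by
    simp only [Fintype.card_fin]; omega
  have e5 : 2 * p + 3 - 2 = 2 * p + 1 := by omega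
  have e6 : 2 * p + 3 - 1 = 2 * p + 2 := by omega
  rw [e5] at hA
  rw [e6] at hB
  simp only [e1, show p + 2 - 1 = p + 1 from rfl, show p + 2 - 2 = p from rfl,
    show 2 * p + 2 - 1 = 2 * p + 1 from by omega] at hA ⊢
  have hsym : (2 * p + 1).choose (p + 1) = (2 * p + 1).choose p := by
    rw [← Nat.choose_symm (show p + 1 ≤ 2 * p + 1 by omega)]
    congr 1
    omega
  have hpas : (2 * p + 2).choose (p + 1) = (2 * p + 1).choose p + (2 * p + 1).choose (p + 1) := by
    rw [show 2 * p + 2 = (2 * p + 1) + 1 from by omega]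
    exact Nat.choose_succ_succ _ _
  have hc2' : (((2 * p + 2).choose (p + 1) : ℕ) : ℝ) = 2 * (((2 * p + 1).choose p : ℕ) : ℝ) := by
    rw [hpas, hsym]; push_cast; ring
  have hc3pos : (0 : ℝ) < (((2 * p + 1).choose p : ℕ) : ℝ) := by
    exact_mod_cast Nat.choose_pos (by omega)
  have hA' : A = 2 ^ (p + 2) * (((2 * p + 1).choose p : ℕ) : ℝ) := by
    rw [hA, hsym]; ring
  have hPP : ((↑(p + 2) : ℝ) - 1) = (p : ℝ) + 1 := by push_cast; ring
  have hEG : E ^ (p + 1) * G = 1 := by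
    rw [hG, hEdef, ← Real.exp_nat_mul, ← Real.exp_add,
      show (↑(p + 1) : ℝ) * v (Sum.inr ()) + -((↑(p + 2) : ℝ) - 1) * v (Sum.inr ()) = 0
        from by push_cast; ring,
      Real.exp_zero]
  have hS : (∑ i : Fin (2 * p + 3 - 1), (2 * v (Sum.inl i) * E) ^ 2) = 4 * E ^ 2 * X := by
    rw [hX, Finset.mul_sum]
    exact Finset.sum_congr rfl fun i _ => by ring
  rw [hS, hB, hA', hc2', hPP]
  have hP1 : (0 : ℝ) < (p : ℝ) + 1 := by positivity
  field_simp
  linear_combination (4 * 2 ^ p) * hEG
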